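/- Let d be a positive integer with 1 ≤ d ≤ 48, and define f(x) = (1/6)(x - 1/2)^3 + ((48 - d)/(24d))(x - 1/2). Then for all x ∈ [0,1), one has √(3/(2d)) · f'(x) + f(x) ≥ 0, where f' denotes the derivative of f. -/

import Mathlib

set_option maxHeartbeats 1000000

lemma neg_side_aux (D s c u : ℝ) (hD1 : 1 ≤ D) (hD2 : D ≤ 48) (hs : 0 ≤ s)
    (hs2 : s^2*(2*D) = 3) (hc : c*(24*D) = 48 - D)
    (hu0 : 0 ≤ u) (hu : u ≤ 1/2) :
    0 ≤ -u^3/6 + s*u^2/2 - c*u + s*c := by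
  have hD0 : (0:ℝ) < D := by linarith
  have hc0 : 0 ≤ c := by nlinarith
  have e1 : (s*(D+24))^2 * (2*D) = 3*(D+24)^2 := by linear_combination ((D+24)^2)*hs2
  have hA0 : 0 ≤ s*(D+24) := mul_nonneg hs (by linarith)
  have hA2 : 144 ≤ (s*(D+24))^2 := by nlinarith [sq_nonneg (D-24)]
  have h12 : 12 ≤ s*(D+24) := by nlinarith
  rcases le_or_gt (s^2) (2*c) with hA | hB
  · -- case A : 2c ≥ s²
    have idA : 12*D*(-u^3/6 + s*u^2/2 - c*u + s*c)
        = (s*(D+24) - 12) + 2*D*(1/2 - u)*((2*u - 3*s + 1/2)^2/4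
            + (3/4)*(s - 1/2)^2 + 3*(2*c - s^2)) := by
      linear_combination (s/2 - 1/4) * hc
    have hq : 0 ≤ (2*u - 3*s + 1/2)^2/4 + (3/4)*(s - 1/2)^2 + 3*(2*c - s^2) := by
      nlinarith [sq_nonneg (2*u - 3*s + 1/2), sq_nonneg (s - 1/2)]
    have ht : 0 ≤ 2*D*(1/2 - u)*((2*u - 3*s + 1/2)^2/4 + (3/4)*(s - 1/2)^2 + 3*(2*c - s^2)) :=
      mul_nonneg (mul_nonneg (by linarith) (by linarith)) hq
    nlinarith [idA, ht, h12]
  · -- case B : s² > 2c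
    set r := Real.sqrt (s^2 - 2*c) with hrdef
    have hr0 : 0 ≤ r := Real.sqrt_nonneg _
    have hr2 : r^2 = s^2 - 2*c := Real.sq_sqrt (by linarith)
    have hrs : r ≤ s := by
      calc r ≤ Real.sqrt (s^2) := Real.sqrt_le_sqrt (by linarith)
        _ = s := Real.sqrt_sq hs
    rcases le_or_gt u (s + 2*r) with hB1 | hB2
    · have idB1 : 6*(-u^3/6 + s*u^2/2 - c*u + s*c)
          = 2*r^2*(s-r) + 4*s*c + (u-s+r)^2*(2*r+s-u) := by
        linear_combination (s - 3*u)*hr2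
      have t1 : 0 ≤ 2*r^2*(s-r) := mul_nonneg (by positivity) (by linarith)
      have t2 : 0 ≤ 4*s*c := by positivity
      have t3 : 0 ≤ (u-s+r)^2*(2*r+s-u) := mul_nonneg (sq_nonneg _) (by linarith)
      linarith
    · have hD30 : 30 < D := by nlinarith
      have hs14 : s ≤ 1/4 := by nlinarith
      have e2 : (s*(12*D))^2 = 216*D := by linear_combination (72*D)*hs2
      have hs780 : 0 ≤ s*(12*D) := mul_nonneg hs (by linarith)
      have hsq : (s*(12*D))^2 ≤ (D+78)^2 := by rw [e2]; nlinarith [sq_nonneg (D-30)]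
      have hs78 : s*(12*D) ≤ D + 78 := by
        have h' := Real.sqrt_le_sqrt hsq
        rwa [Real.sqrt_sq hs780, Real.sqrt_sq (by linarith : (0:ℝ) ≤ D + 78)] at h'
      have e3 : (1/4 - s - s^2 + 4*c)*(12*D) = D + 78 - s*(12*D) := by
        linear_combination (-6)*hs2 + 2*hc
      have hE3 : 0 ≤ 1/4 - s - s^2 + 4*c := by nlinarith
      have hQ0 : 0 ≤ 1/4 - s - s^2 + 4*c + r*(1/2 - s) := by
        nlinarith [mul_nonneg hr0 (show (0:ℝ) ≤ 1/2 - s by linarith)]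
      have hbr : 0 ≤ (1/4 - s - s^2 + 4*c + r*(1/2-s)) + (u-s-r)*(u-2*s+r+1/2) := by
        nlinarith [mul_nonneg (show (0:ℝ) ≤ u-s-r by linarith)
          (show (0:ℝ) ≤ u-2*s+r+1/2 by linarith)]
      have idB2 : 12*D*(-u^3/6 + s*u^2/2 - c*u + s*c)
          = (s*(D+24) - 12) + 2*D*(1/2 - u)*((1/4 - s - s^2 + 4*c + r*(1/2-s))
              + (u-s-r)*(u-2*s+r+1/2)) := by
        linear_combination (s/2 - 1/4)*hc + (D - 2*D*u)*hr2
      have ht : 0 ≤ 2*D*(1/2 - u)*((1/4 - s - s^2 + 4*c + r*(1/2-s))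
          + (u-s-r)*(u-2*s+r+1/2)) :=
        mul_nonneg (mul_nonneg (by linarith) (by linarith)) hbr
      nlinarith [idB2, ht, h12]

lemma cubic_key (D s c t : ℝ) (hD1 : 1 ≤ D) (hD2 : D ≤ 48) (hs : 0 ≤ s)
    (hs2 : s^2 * (2*D) = 3) (hc : c * (24*D) = 48 - D)
    (ht1 : -(1/2) ≤ t) (ht2 : t ≤ 1/2) :
    t^3/6 + s*t^2/2 + c*t + s*c ≥ 0 := by
  have hD0 : (0:ℝ) < D := by linarith
  have hc0 : 0 ≤ c := by nlinarith
  rcases le_or_gt 0 t with h | h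
  · nlinarith [mul_nonneg hc0 h, mul_nonneg hs hc0, mul_nonneg hs (mul_nonneg h h),
      mul_nonneg (mul_nonneg h h) h]
  · have := neg_side_aux D s c (-t) hD1 hD2 hs hs2 hc (by linarith) (by linarith)
    nlinarith [this]

/-- Proposition A.1(i): for `1 ≤ d ≤ 48` and
`f x = (1/6)(x - 1/2)^3 + ((48 - d)/(24d))(x - 1/2)`, one has
`√(3/(2d)) · f'(x) + f(x) ≥ 0` for all `x ∈ [0,1)`. -/
theorem stmt_0 (d : ℕ) (hd1 : 1 ≤ d) (hd2 : d ≤ 48)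
    (f : ℝ → ℝ)
    (hf : ∀ x : ℝ, f x = (1/6) * (x - 1/2)^3 + ((48 - (d:ℝ)) / (24 * d)) * (x - 1/2)) :
    ∀ x ∈ Set.Ico (0:ℝ) 1,
      Real.sqrt (3 / (2 * d)) * deriv f x + f x ≥ 0 := by
  have hfe : f = fun x : ℝ => (1/6) * (x - 1/2)^3 + ((48 - (d:ℝ)) / (24 * d)) * (x - 1/2) :=
    funext hf
  have hderiv : ∀ x : ℝ, deriv f x = (1/2) * (x - 1/2)^2 + (48 - (d:ℝ)) / (24 * d) := by
    intro x
    rw [hfe]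
    have h1 : HasDerivAt (fun x : ℝ => x - 1/2) 1 x := (hasDerivAt_id x).sub_const _
    have h2 := (h1.pow 3).const_mul (1/6 : ℝ)
    have h3 := h1.const_mul ((48 - (d:ℝ)) / (24 * d))
    have h4 := h2.add h3
    have h5 : HasDerivAt (fun x : ℝ => (1/6) * (x - 1/2)^3 + ((48 - (d:ℝ)) / (24 * d)) * (x - 1/2))
        ((1/2) * (x - 1/2)^2 + (48 - (d:ℝ)) / (24 * d)) x := by
      have e : (1/2) * (x - 1/2)^2 + (48 - (d:ℝ)) / (24 * d) = 1 / 6 * ((3:ℕ) * (x - 1 / 2) ^ (3 - 1) * 1) + (48 - (d:ℝ)) / (24 * d) * 1 := by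
        norm_num; ring
      rw [e]; exact h4
    exact h5.deriv
  intro x hx
  obtain ⟨hx0, hx1⟩ := hx
  set D := (d:ℝ) with hDdef
  have hD1 : (1:ℝ) ≤ D := by rw [hDdef]; exact_mod_cast hd1
  have hD2 : D ≤ 48 := by rw [hDdef]; exact_mod_cast hd2
  have hD0 : (0:ℝ) < D := by linarith
  set s := Real.sqrt (3 / (2 * D)) with hsdef
  have hs : 0 ≤ s := Real.sqrt_nonneg _
  have hs2 : s^2 * (2*D) = 3 := by
    have : s^2 = 3 / (2*D) := Real.sq_sqrt (by positivity)
    rw [this]; field_simp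
  set c := (48 - D) / (24 * D) with hcdef
  have hc : c * (24*D) = 48 - D := by
    rw [hcdef]; field_simp
  have key := cubic_key D s c (x - 1/2) hD1 hD2 hs hs2 hc (by linarith) (by linarith)
  have hval : s * deriv f x + f x
      = (x-1/2)^3/6 + s*(x-1/2)^2/2 + c*(x-1/2) + s*c := by
    rw [hderiv x, hf x]; ring
  rw [ge_iff_le, ← hval] at key
  exact key
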